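/- Let $\hat a : [0,2\pi) \to [0,1]$ be measurable and constant equal to $c$ on some interval $[\alpha, \omega] \subseteq [0,2\pi)$. Then for every $0 < \delta < (\omega - \alpha)/2$ and every $x \in [\alpha + \delta, \omega - \delta]$, the Cesàro mean satisfies $|(\widehat S_n \hat a)(x) - c| \le \frac{1}{n \sin^2(\delta/2)}$. -/

import Mathlib

open MeasureTheory Finset

/-- Lebesgue measure restricted to `[0, 2π)`. -/
noncomputable def μ2π : Measure ℝ := volume.restrict (Set.Ico 0 (2 * Real.pi))

/-- The `n`-th Cesàro (Fejér) mean of the Fourier series of `a` at `x`. -/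
noncomputable def cesaroMean (n : ℕ) (a : ℝ → ℝ) (x : ℝ) : ℂ :=
  ∑ m ∈ Finset.Icc (-(n : ℤ) + 1) ((n : ℤ) - 1),
    (((((n : ℝ) - abs (m : ℝ)) / n : ℝ)) : ℂ) *
      Complex.exp (Complex.I * m * x) *
      ((1 / (2 * (Real.pi : ℂ))) * ∫ t, Complex.exp (-Complex.I * m * t) * (a t : ℂ) ∂μ2π)


lemma fejer_ker (z : ℂ) (hz : z ≠ 0) (n : ℕ) :
    ∑ m ∈ Finset.Icc (-(n:ℤ)+1) ((n:ℤ)-1), ((n:ℂ) - (m.natAbs : ℂ)) * z ^ m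
    = (∑ k ∈ Finset.range n, z ^ (k:ℤ)) * (∑ k ∈ Finset.range n, z ^ (-(k:ℤ))) := by
  induction n with
  | zero => simp
  | succ n ih =>
    have hsub : Finset.Icc (-(n:ℤ)+1) ((n:ℤ)-1) ⊆ Finset.Icc (-(n:ℤ)) (n:ℤ) := by
      apply Finset.Icc_subset_Icc <;> omega
    have hext : ∑ m ∈ Finset.Icc (-(n:ℤ)) (n:ℤ), ((n:ℂ) - (m.natAbs : ℂ)) * z ^ m
        = ∑ m ∈ Finset.Icc (-(n:ℤ)+1) ((n:ℤ)-1), ((n:ℂ) - (m.natAbs : ℂ)) * z ^ m := by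
      refine (Finset.sum_subset hsub ?_).symm
      intro m hm hm'
      simp only [Finset.mem_Icc] at hm hm'
      have : m.natAbs = n := by omega
      simp [this]
    have hIcc : ∀ m : ℤ, (-(n:ℤ)+1 ≤ m ∧ m ≤ (n:ℤ)-1) → True := fun _ _ => trivial
    have hL : ∑ m ∈ Finset.Icc (-((n:ℕ)+1:ℤ)+1) (((n:ℕ)+1:ℤ)-1),
          (((n:ℕ)+1:ℂ) - (m.natAbs : ℂ)) * z ^ m
        = (∑ m ∈ Finset.Icc (-(n:ℤ)) (n:ℤ), ((n:ℂ) - (m.natAbs : ℂ)) * z ^ m)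
          + ∑ m ∈ Finset.Icc (-(n:ℤ)) (n:ℤ), z ^ m := by
      have : Finset.Icc (-((n:ℕ)+1:ℤ)+1) (((n:ℕ)+1:ℤ)-1) = Finset.Icc (-(n:ℤ)) (n:ℤ) := by
        congr 1 <;> omega
      rw [this, ← Finset.sum_add_distrib]
      apply Finset.sum_congr rfl
      intro m hm
      ring
    have h1 : ∑ k ∈ Finset.range n, z ^ ((n:ℤ) - (k:ℤ)) = ∑ m ∈ Finset.Icc (1:ℤ) (n:ℤ), z ^ m := by
      refine Finset.sum_nbij' (fun k => (n:ℤ) - (k:ℤ)) (fun m => ((n:ℤ) - m).toNat) ?_ ?_ ?_ ?_ ?_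
      · intro k hk; simp at hk ⊢; try omega
      · intro m hm; simp at hm ⊢; try omega
      · intro k hk; simp at hk ⊢; try omega
      · intro m hm; simp at hm ⊢; try omega
      · intro k hk; rfl
    have h2 : ∑ k ∈ Finset.range n, z ^ ((k:ℤ) - (n:ℤ)) = ∑ m ∈ Finset.Icc (-(n:ℤ)) (-1:ℤ), z ^ m := by
      refine Finset.sum_nbij' (fun k => (k:ℤ) - (n:ℤ)) (fun m => (m + (n:ℤ)).toNat) ?_ ?_ ?_ ?_ ?_
      · intro k hk; simp at hk ⊢; try omega
      · intro m hm; simp at hm ⊢; try omega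
      · intro k hk; simp at hk ⊢; try omega
      · intro m hm; simp at hm ⊢; try omega
      · intro k hk; rfl
    have hsplit : ∑ m ∈ Finset.Icc (-(n:ℤ)) (n:ℤ), z ^ m
        = (∑ m ∈ Finset.Icc (-(n:ℤ)) (-1:ℤ), z ^ m) + z ^ (0:ℤ)
          + ∑ m ∈ Finset.Icc (1:ℤ) (n:ℤ), z ^ m := by
      have e1 : Finset.Icc (-(n:ℤ)) (n:ℤ)
          = (Finset.Icc (-(n:ℤ)) (-1:ℤ) ∪ {(0:ℤ)}) ∪ Finset.Icc (1:ℤ) (n:ℤ) := by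
        ext m; simp; omega
      rw [e1, Finset.sum_union, Finset.sum_union]
      · simp
      · simp
      · rw [Finset.disjoint_left]; intro m hm hm'; simp at hm hm'; omega
    have hzz : z ^ ((n:ℕ):ℤ) * z ^ (-((n:ℕ):ℤ)) = 1 := by
      rw [← zpow_add₀ hz]; simp
    have hznT : z ^ ((n:ℕ):ℤ) * ∑ k ∈ Finset.range n, z ^ (-(k:ℤ))
        = ∑ m ∈ Finset.Icc (1:ℤ) (n:ℤ), z ^ m := by
      rw [Finset.mul_sum, ← h1]
      apply Finset.sum_congr rfl
      intro k hk
      rw [← zpow_add₀ hz]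
      first | (congr 1; omega) | congr 1
    have hznS : z ^ (-((n:ℕ):ℤ)) * ∑ k ∈ Finset.range n, z ^ (k:ℤ)
        = ∑ m ∈ Finset.Icc (-(n:ℤ)) (-1:ℤ), z ^ m := by
      rw [Finset.mul_sum, ← h2]
      apply Finset.sum_congr rfl
      intro k hk
      rw [← zpow_add₀ hz]
      first | (congr 1; omega) | congr 1
    push_cast
    rw [hL, hext, ih, hsplit, Finset.sum_range_succ, Finset.sum_range_succ,
      ← hznT, ← hznS, zpow_zero]
    push_cast
    linear_combination -hzz

lemma abs_exp_I_sub_one (θ : ℝ) :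
    ‖Complex.exp (Complex.I * θ) - 1‖ = 2 * |Real.sin (θ/2)| := by
  have key : Complex.exp (Complex.I * θ) - 1
      = Complex.exp ((θ/2 : ℝ) * Complex.I) * (2 * Complex.I * Complex.sin ((θ/2 : ℝ))) := by
    have hs : 2 * Complex.I * Complex.sin ((θ/2 : ℝ))
        = Complex.exp (((θ/2 : ℝ)) * Complex.I) - Complex.exp (-((θ/2 : ℝ)) * Complex.I) := by
      rw [Complex.sin]
      ring_nf
      rw [Complex.I_sq]
      ring
    rw [hs, mul_sub, ← Complex.exp_add, ← Complex.exp_add]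
    norm_num
    congr 1
    push_cast
    ring
  rw [key, norm_mul, norm_mul, norm_mul, Complex.norm_exp_ofReal_mul_I,
    ← Complex.ofReal_sin, Complex.norm_real, Real.norm_eq_abs, Complex.norm_I, Complex.norm_two]
  ring

lemma abs_geom_sum_le (n : ℕ) (y : ℝ) (hy : Real.sin (y/2) ≠ 0) :
    ‖∑ k ∈ Finset.range n, Complex.exp (Complex.I * k * y)‖ ≤ 1 / |Real.sin (y/2)| := by
  set w := Complex.exp (Complex.I * y) with hw
  have hwk : ∀ k : ℕ, Complex.exp (Complex.I * k * y) = w ^ k := by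
    intro k; rw [hw, ← Complex.exp_nat_mul]; congr 1; ring
  have hsin : (0:ℝ) < |Real.sin (y/2)| := abs_pos.mpr hy
  have hgeom : (∑ k ∈ Finset.range n, w ^ k) * (w - 1) = w ^ n - 1 := geom_sum_mul w n
  have habsw : ‖w‖ = 1 := by
    rw [hw]; rw [mul_comm]; exact Complex.norm_exp_ofReal_mul_I y
  have h2 : ‖w ^ n - 1‖ ≤ 2 := by
    calc ‖w ^ n - 1‖ ≤ ‖w ^ n‖ + ‖(1:ℂ)‖ := by
          exact norm_sub_le _ _
      _ = 2 := by rw [norm_pow, habsw]; norm_num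
  have h1 : ‖w - 1‖ = 2 * |Real.sin (y/2)| := abs_exp_I_sub_one y
  have key : ‖∑ k ∈ Finset.range n, w ^ k‖ * (2 * |Real.sin (y/2)|) ≤ 2 := by
    rw [← h1, ← norm_mul, hgeom]; exact h2
  simp only [hwk]
  rw [le_div_iff₀ hsin]
  nlinarith [norm_nonneg (∑ k ∈ Finset.range n, w ^ k)]

lemma sin_lower (δ y : ℝ) (hδ0 : 0 < δ) (hδπ : δ < Real.pi)
    (h1 : δ ≤ |y|) (h2 : |y| ≤ 2*Real.pi - δ) :
    Real.sin (δ/2) ≤ |Real.sin (y/2)| := by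
  have hπ := Real.pi_pos
  have habs : |Real.sin (y/2)| = Real.sin (|y|/2) := by
    have hnn : 0 ≤ Real.sin (|y|/2) :=
      Real.sin_nonneg_of_nonneg_of_le_pi (by positivity) (by linarith [abs_nonneg y])
    rcases le_total 0 y with h | h
    · rw [abs_of_nonneg h] at *; exact abs_of_nonneg hnn
    · rw [abs_of_nonpos h] at *
      rw [neg_div, Real.sin_neg] at hnn ⊢
      exact abs_of_nonpos (by linarith)
  rw [habs]
  set u := |y|/2 with hu
  have hu1 : δ/2 ≤ u := by rw [hu]; linarith
  have hu2 : u ≤ Real.pi - δ/2 := by rw [hu]; linarith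
  have hmono := Real.strictMonoOn_sin.monotoneOn
  rcases le_total u (Real.pi/2) with h | h
  · exact hmono ⟨by linarith, by linarith⟩ ⟨by linarith, h⟩ hu1
  · rw [← Real.sin_pi_sub u]
    exact hmono ⟨by linarith, by linarith⟩ ⟨by linarith, by linarith⟩ (by linarith)

lemma mu2pi_univ : μ2π Set.univ = ENNReal.ofReal (2 * Real.pi) := by
  rw [μ2π, Measure.restrict_apply_univ, Real.volume_Ico]
  norm_num

instance : IsFiniteMeasure μ2π := by
  constructor; rw [mu2pi_univ]; exact ENNReal.ofReal_lt_top

lemma integrable_bdd {g : ℝ → ℂ} (hg : Measurable g) {C : ℝ} (hC : ∀ t, ‖g t‖ ≤ C) :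
    Integrable g μ2π :=
  ⟨hg.aestronglyMeasurable, HasFiniteIntegral.of_bounded (ae_of_all _ hC)⟩

lemma measurable_cexp (m : ℤ) : Measurable (fun t : ℝ => Complex.exp (-Complex.I * m * t)) := by
  have : (fun t : ℝ => Complex.exp (-Complex.I * m * t))
      = fun t : ℝ => Complex.exp ((-Complex.I * m) * (t : ℂ)) := by
    funext t; ring_nf
  rw [this]
  exact Complex.measurable_exp.comp (Complex.measurable_ofReal.const_mul _)

lemma abs_cexp (m : ℤ) (t : ℝ) : ‖Complex.exp (-Complex.I * m * t)‖ = 1 := by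
  rw [Complex.norm_exp]
  norm_num [Complex.mul_re]

lemma integral_cexp (m : ℤ) :
    ∫ t, Complex.exp (-Complex.I * m * t) ∂μ2π
      = if m = 0 then ((2 * Real.pi : ℝ) : ℂ) else 0 := by
  have h2π : (0:ℝ) ≤ 2 * Real.pi := by positivity
  by_cases hm : m = 0
  · subst hm
    simp only [Int.cast_zero, mul_zero, zero_mul, Complex.exp_zero, if_true]
    rw [integral_const, measureReal_def, mu2pi_univ, ENNReal.toReal_ofReal h2π]
    simp
  · rw [if_neg hm, μ2π]
    have hc : (-Complex.I * (m:ℂ)) ≠ 0 := by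
      apply mul_ne_zero
      · simpa using Complex.I_ne_zero
      · exact_mod_cast hm
    have h1 : ∫ t in Set.Ico 0 (2*Real.pi), Complex.exp (-Complex.I * m * t)
        = ∫ t in (0:ℝ)..(2*Real.pi), Complex.exp ((-Complex.I * m) * t) := by
      rw [integral_Ico_eq_integral_Ioo, ← integral_Ioc_eq_integral_Ioo,
        ← intervalIntegral.integral_of_le h2π]
    rw [h1, integral_exp_mul_complex hc]
    have h2 : Complex.exp (-Complex.I * m * (2 * (Real.pi:ℂ))) = 1 := by
      rw [show (-Complex.I * (m:ℂ) * (2 * (Real.pi:ℂ))) = ((-m : ℤ):ℂ) * (2*Real.pi*Complex.I) by push_cast; ring,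
        Complex.exp_int_mul_two_pi_mul_I]
    push_cast
    rw [h2]
    simp

theorem fejer_mean_bound_on_constancy_interval
    (a : ℝ → ℝ) (ha_meas : Measurable a) (ha01 : ∀ x, a x ∈ Set.Icc (0:ℝ) 1)
    (α ω c : ℝ) (hα : 0 ≤ α) (hω : ω < 2 * Real.pi)
    (hconst : ∀ x ∈ Set.Icc α ω, a x = c)
    (δ : ℝ) (hδ0 : 0 < δ) (hδ : δ < (ω - α) / 2)
    (x : ℝ) (hx : x ∈ Set.Icc (α + δ) (ω - δ))
    (n : ℕ) (hn : 1 ≤ n) :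
    ‖cesaroMean n a x - (c : ℂ)‖ ≤ 1 / (n * Real.sin (δ / 2) ^ 2) := by
  have hπ := Real.pi_pos
  have hn0 : (n:ℝ) ≠ 0 := by positivity
  have hn' : (0:ℝ) < n := by exact_mod_cast hn
  have hδπ : δ < Real.pi := by linarith [hδ]
  have hsinδ : 0 < Real.sin (δ/2) :=
    Real.sin_pos_of_pos_of_lt_pi (by linarith) (by linarith)
  have hB0 : (0:ℝ) ≤ 1 / (n * Real.sin (δ/2)^2) := by positivity
  have hαω : α ≤ ω := by linarith
  have hc01 : c ∈ Set.Icc (0:ℝ) 1 := by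
    have h := hconst α ⟨le_refl α, hαω⟩
    rw [← h]; exact ha01 α
  obtain ⟨hx1, hx2⟩ := hx
  set M := Finset.Icc (-(n : ℤ) + 1) ((n : ℤ) - 1) with hM
  set K : ℝ → ℂ := fun t => ∑ m ∈ M,
    (((((n : ℝ) - |(m:ℝ)|) / n : ℝ)) : ℂ) * Complex.exp (Complex.I * m * x) *
      Complex.exp (-Complex.I * m * t) with hKdef
  -- key rearrangement for an arbitrary bounded measurable density g
  have hint_term : ∀ (m : ℤ) (g : ℝ → ℂ), Measurable g → (∀ t, ‖g t‖ ≤ 1) →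
      Integrable (fun t : ℝ =>
        (((((n : ℝ) - |(m:ℝ)|) / n : ℝ)) : ℂ) * Complex.exp (Complex.I * m * x) *
          (Complex.exp (-Complex.I * m * t) * g t)) μ2π := by
    intro m g hg hgb
    apply integrable_bdd (C := ‖(((((n : ℝ) - |(m:ℝ)|) / n : ℝ)) : ℂ) * Complex.exp (Complex.I * m * x)‖)
    · exact measurable_const.mul ((measurable_cexp m).mul hg)
    · intro t
      have h1 : ‖Complex.exp (-Complex.I * m * t)‖ = 1 := abs_cexp m t
      calc ‖(((((n : ℝ) - |(m:ℝ)|) / n : ℝ)) : ℂ) * Complex.exp (Complex.I * m * x) *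
            (Complex.exp (-Complex.I * m * t) * g t)‖
          = ‖(((((n : ℝ) - |(m:ℝ)|) / n : ℝ)) : ℂ) * Complex.exp (Complex.I * m * x)‖ *
            (‖Complex.exp (-Complex.I * m * t)‖ * ‖g t‖) := by simp only [norm_mul]; try ring
        _ = ‖(((((n : ℝ) - |(m:ℝ)|) / n : ℝ)) : ℂ) * Complex.exp (Complex.I * m * x)‖ * ‖g t‖ := by
            rw [h1, one_mul]
        _ ≤ ‖(((((n : ℝ) - |(m:ℝ)|) / n : ℝ)) : ℂ) * Complex.exp (Complex.I * m * x)‖ * 1 :=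
            mul_le_mul_of_nonneg_left (hgb t) (norm_nonneg _)
        _ = _ := mul_one _
  have key : ∀ (g : ℝ → ℂ), Measurable g → (∀ t, ‖g t‖ ≤ 1) →
      ∑ m ∈ M, (((((n : ℝ) - |(m:ℝ)|) / n : ℝ)) : ℂ) * Complex.exp (Complex.I * m * x) *
          ((1 / (2 * (Real.pi : ℂ))) * ∫ (t : ℝ), Complex.exp (-Complex.I * m * t) * g t ∂μ2π)
        = (1 / (2 * (Real.pi : ℂ))) * ∫ (t : ℝ), K t * g t ∂μ2π := by
    intro g hg hgb
    have step1 : ∀ m ∈ M, (((((n : ℝ) - |(m:ℝ)|) / n : ℝ)) : ℂ) * Complex.exp (Complex.I * m * x) *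
          ((1 / (2 * (Real.pi : ℂ))) * ∫ (t : ℝ), Complex.exp (-Complex.I * m * t) * g t ∂μ2π)
        = (1 / (2 * (Real.pi : ℂ))) *
            ∫ (t : ℝ), (((((n : ℝ) - |(m:ℝ)|) / n : ℝ)) : ℂ) * Complex.exp (Complex.I * m * x) *
              (Complex.exp (-Complex.I * m * t) * g t) ∂μ2π := by
      intro m _
      rw [integral_const_mul]
      ring
    rw [Finset.sum_congr rfl step1, ← Finset.mul_sum,
      ← integral_finset_sum M (fun m _ => hint_term m g hg hgb)]
    congr 1
    apply integral_congr_ae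
    apply ae_of_all
    intro t
    rw [hKdef]
    simp only
    rw [Finset.sum_mul]
    apply Finset.sum_congr rfl
    intro m _
    ring
  -- identify cesaroMean with the kernel integral
  have hameas : Measurable (fun t => ((a t : ℂ))) := Complex.measurable_ofReal.comp ha_meas
  have hanorm : ∀ t, ‖((a t : ℂ))‖ ≤ 1 := by
    intro t
    rw [Complex.norm_real]
    rcases ha01 t with ⟨h1, h2⟩
    rw [Real.norm_eq_abs, abs_of_nonneg h1]; exact h2
  have hA : cesaroMean n a x = (1 / (2 * (Real.pi : ℂ))) * ∫ t, K t * (a t : ℂ) ∂μ2π := by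
    rw [cesaroMean, ← key (fun t => ((a t : ℂ))) hameas hanorm]
  -- the constant c
  have hcnorm : ∀ t : ℝ, ‖((c : ℂ))‖ ≤ 1 := by
    intro t
    rw [Complex.norm_real, Real.norm_eq_abs, abs_of_nonneg hc01.1]; exact hc01.2
  have hC : (c : ℂ) = (1 / (2 * (Real.pi : ℂ))) * ∫ t, K t * (c : ℂ) ∂μ2π := by
    rw [← key (fun _ => (c : ℂ)) measurable_const hcnorm]
    have heval : ∀ m : ℤ, (∫ t, Complex.exp (-Complex.I * m * t) * (c:ℂ) ∂μ2π)
        = (if m = 0 then ((2 * Real.pi : ℝ) : ℂ) else 0) * c := by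
      intro m
      rw [integral_mul_const, integral_cexp]
    simp only [heval]
    rw [Finset.sum_eq_single_of_mem (0:ℤ)]
    · rw [if_pos rfl]
      have hπc : ((Real.pi : ℝ):ℂ) ≠ 0 := by exact_mod_cast Real.pi_ne_zero
      have hnc : ((n:ℕ):ℂ) ≠ 0 := by exact_mod_cast hn0
      push_cast
      norm_num
      field_simp
    · rw [hM, Finset.mem_Icc]; omega
    · intro m _ hm0
      rw [if_neg hm0]
      simp
  -- integrability of K * a and K * c
  have hKmeas : Measurable K := by
    rw [hKdef]
    apply Finset.measurable_sum
    intro m _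
    exact (measurable_const.mul (measurable_cexp m))
  have hKbdd : ∀ t, ‖K t‖ ≤ ∑ m ∈ M, ‖(((((n : ℝ) - |(m:ℝ)|) / n : ℝ)) : ℂ) * Complex.exp (Complex.I * m * x)‖ := by
    intro t
    rw [hKdef]
    refine le_trans (norm_sum_le _ _) (Finset.sum_le_sum ?_)
    intro m _
    rw [norm_mul]
    have h1 : ‖Complex.exp (-Complex.I * m * t)‖ = 1 := abs_cexp m t
    rw [h1, mul_one]
  have hIa : Integrable (fun t => K t * (a t : ℂ)) μ2π := by
    apply integrable_bdd (hKmeas.mul hameas)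
      (C := ∑ m ∈ M, ‖(((((n : ℝ) - |(m:ℝ)|) / n : ℝ)) : ℂ) * Complex.exp (Complex.I * m * x)‖)
    intro t
    rw [Pi.mul_apply, norm_mul]
    calc ‖K t‖ * ‖((a t : ℂ))‖ ≤ ‖K t‖ * 1 := by
          exact mul_le_mul_of_nonneg_left (hanorm t) (norm_nonneg _)
      _ = ‖K t‖ := mul_one _
      _ ≤ _ := hKbdd t
  have hIc : Integrable (fun t => K t * (c : ℂ)) μ2π := by
    apply integrable_bdd (hKmeas.mul measurable_const)
      (C := ∑ m ∈ M, ‖(((((n : ℝ) - |(m:ℝ)|) / n : ℝ)) : ℂ) * Complex.exp (Complex.I * m * x)‖)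
    intro t
    rw [Pi.mul_apply, norm_mul]
    calc ‖K t‖ * ‖((c : ℂ))‖ ≤ ‖K t‖ * 1 := by
          exact mul_le_mul_of_nonneg_left (hcnorm t) (norm_nonneg _)
      _ = ‖K t‖ := mul_one _
      _ ≤ _ := hKbdd t
  -- the difference as a single integral
  have hdiff : cesaroMean n a x - (c : ℂ)
      = (1 / (2 * (Real.pi : ℂ))) * ∫ t, K t * ((a t : ℂ) - c) ∂μ2π := by
    rw [hA]
    conv_lhs => rw [hC]
    rw [← mul_sub, ← integral_sub hIa hIc]
    congr 1
    apply integral_congr_ae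
    apply ae_of_all
    intro t
    ring
  -- pointwise bound on the kernel off the constancy interval
  have hae : ∀ᵐ t ∂μ2π, ‖K t * ((a t : ℂ) - c)‖ ≤ 1 / (n * Real.sin (δ/2)^2) := by
    rw [μ2π]
    rw [ae_restrict_iff' measurableSet_Ico]
    apply ae_of_all
    intro t ht
    by_cases hta : t ∈ Set.Icc α ω
    · rw [hconst t hta]
      simp only [sub_self, mul_zero, norm_zero]
      positivity
    · -- off the interval
      have htcase : t < α ∨ ω < t := by
        rw [Set.mem_Icc, not_and_or, not_le, not_le] at hta
        exact hta
      have hy1 : δ ≤ |x - t| := by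
        rcases htcase with h | h
        · rw [le_abs]; left; linarith
        · rw [le_abs]; right; linarith
      have hy2 : |x - t| ≤ 2*Real.pi - δ := by
        rcases ht with ⟨ht0, ht2⟩
        rw [abs_le]
        rcases htcase with h | h
        · constructor <;> linarith
        · constructor <;> linarith
      have hsin : Real.sin (δ/2) ≤ |Real.sin ((x - t)/2)| := sin_lower δ (x-t) hδ0 hδπ hy1 hy2
      have hsne : Real.sin ((x - t)/2) ≠ 0 := by
        intro h0
        rw [h0, abs_zero] at hsin
        linarith
      have hsne' : Real.sin ((t - x)/2) ≠ 0 := by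
        rw [show (t-x)/2 = -((x-t)/2) by ring, Real.sin_neg]
        exact neg_ne_zero.mpr hsne
      have habsS : ‖∑ k ∈ Finset.range n, Complex.exp (Complex.I * k * ((x - t : ℝ) : ℂ))‖
          ≤ 1 / |Real.sin ((x-t)/2)| := abs_geom_sum_le n (x-t) hsne
      have habsT : ‖∑ k ∈ Finset.range n, Complex.exp (Complex.I * k * ((t - x : ℝ) : ℂ))‖
          ≤ 1 / |Real.sin ((x-t)/2)| := by
        have h := abs_geom_sum_le n (t-x) hsne'
        rw [show (t-x)/2 = -((x-t)/2) by ring, Real.sin_neg, abs_neg] at h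
        exact h
      -- kernel identity
      set z := Complex.exp (Complex.I * ((x - t : ℝ) : ℂ)) with hz
      have hz0 : z ≠ 0 := Complex.exp_ne_zero _
      have hS : (∑ k ∈ Finset.range n, z ^ (k:ℤ))
          = ∑ k ∈ Finset.range n, Complex.exp (Complex.I * k * ((x - t : ℝ) : ℂ)) := by
        apply Finset.sum_congr rfl
        intro k _
        rw [hz, zpow_natCast, ← Complex.exp_nat_mul]
        congr 1
        push_cast
        ring
      have hT : (∑ k ∈ Finset.range n, z ^ (-(k:ℤ)))
          = ∑ k ∈ Finset.range n, Complex.exp (Complex.I * k * ((t - x : ℝ) : ℂ)) := by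
        apply Finset.sum_congr rfl
        intro k _
        rw [hz, ← Complex.exp_int_mul]
        congr 1
        push_cast
        ring
      have hKid : K t = (1/(n:ℂ)) *
          ((∑ k ∈ Finset.range n, z ^ (k:ℤ)) * (∑ k ∈ Finset.range n, z ^ (-(k:ℤ)))) := by
        rw [← fejer_ker z hz0 n, hKdef]
        simp only
        rw [Finset.mul_sum, hM]
        apply Finset.sum_congr rfl
        intro m _
        have h1 : Complex.exp (Complex.I*m*x) * Complex.exp (-Complex.I*m*t) = z ^ m := by
          rw [hz, ← Complex.exp_int_mul, ← Complex.exp_add]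
          congr 1
          push_cast
          ring
        have h2 : ((((n:ℝ) - |(m:ℝ)|)/n : ℝ) : ℂ) = (1/(n:ℂ)) * ((n:ℂ) - (m.natAbs:ℂ)) := by
          have h3 : ((m.natAbs:ℝ)) = |(m:ℝ)| := by
            rw [Nat.cast_natAbs]
            push_cast
            ring
          rw [show ((m.natAbs:ℂ)) = ((|(m:ℝ)| : ℝ):ℂ) by rw [← h3]; push_cast; ring]
          push_cast
          rw [mul_comm, mul_one_div]
        rw [mul_assoc, h1, h2]
        ring
      -- final pointwise estimate
      rw [norm_mul, hKid]
      have hγ : ‖((a t : ℂ) - c)‖ ≤ 1 := by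
        rw [show ((a t : ℂ) - c) = (((a t - c : ℝ)) : ℂ) by push_cast; ring, Complex.norm_real,
          Real.norm_eq_abs]
        rcases ha01 t with ⟨h1, h2⟩
        rcases hc01 with ⟨h3, h4⟩
        rw [abs_le]
        constructor <;> linarith
      rw [norm_mul, norm_mul]
      have hn1 : ‖(1/(n:ℂ))‖ = 1/(n:ℝ) := by
        rw [norm_div, norm_one, Complex.norm_natCast]
      rw [hn1]
      have hbound1 : ‖(∑ k ∈ Finset.range n, z ^ (k:ℤ))‖ ≤ 1 / Real.sin (δ/2) := by
        rw [hS]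
        refine le_trans habsS ?_
        apply one_div_le_one_div_of_le hsinδ hsin
      have hbound2 : ‖(∑ k ∈ Finset.range n, z ^ (-(k:ℤ)))‖ ≤ 1 / Real.sin (δ/2) := by
        rw [hT]
        refine le_trans habsT ?_
        apply one_div_le_one_div_of_le hsinδ hsin
      have hfin : (1/(n:ℝ)) * (‖(∑ k ∈ Finset.range n, z ^ (k:ℤ))‖ * ‖(∑ k ∈ Finset.range n, z ^ (-(k:ℤ)))‖)
            * ‖((a t : ℂ) - c)‖ ≤ (1/(n:ℝ)) * ((1/Real.sin (δ/2)) * (1/Real.sin (δ/2))) * 1 := by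
        gcongr
        all_goals first
          | positivity
          | exact norm_nonneg _
          | exact hbound1
          | exact hbound2
          | exact hγ
      refine le_trans hfin ?_
      rw [mul_one]
      rw [show (1/(n:ℝ)) * ((1/Real.sin (δ/2)) * (1/Real.sin (δ/2))) = 1/((n:ℝ) * Real.sin (δ/2)^2) by rw [pow_two, div_mul_div_comm, div_mul_div_comm, one_mul, one_mul]]
  -- put everything together
  rw [hdiff, norm_mul]
  have h2π : ‖(1 / (2 * (Real.pi : ℂ)))‖ = 1 / (2 * Real.pi) := by
    rw [norm_div, norm_one]
    rw [show (2 * (Real.pi : ℂ)) = (((2 * Real.pi : ℝ)) : ℂ) by push_cast; ring, Complex.norm_real,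
      Real.norm_eq_abs, abs_of_pos (by positivity)]
  rw [h2π]
  have hbig := norm_integral_le_of_norm_le_const (μ := μ2π) (C := 1 / (n * Real.sin (δ/2)^2)) hae
  rw [measureReal_def, mu2pi_univ, ENNReal.toReal_ofReal (by positivity)] at hbig
  calc 1 / (2*Real.pi) * ‖∫ t, K t * ((a t : ℂ) - c) ∂μ2π‖
      ≤ 1 / (2*Real.pi) * (1 / (n * Real.sin (δ/2)^2) * (2*Real.pi)) := by
        apply mul_le_mul_of_nonneg_left hbig (by positivity)
    _ = 1 / (n * Real.sin (δ/2)^2) := by field_simp
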